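/- The pushout, in the category of topological spaces, of two copies of the solid torus S¹ × D² along the inclusion of their common boundary torus S¹ × S¹ (i.e., the double of the solid torus along its boundary) is homeomorphic to S¹ × S². -/

import Mathlib

open CategoryTheory Limits Metric

/-- The inclusion of the boundary torus `S¹ × S¹` into the solid torus `S¹ × D²`,
given by the identity on the first factor and the boundary inclusion `S¹ ↪ D²`
on the second factor, as a morphism in `TopCat`. -/
noncomputable def boundaryTorusIncl :
    TopCat.of (sphere (0 : EuclideanSpace ℝ (Fin 2)) 1 ×
        sphere (0 : EuclideanSpace ℝ (Fin 2)) 1) ⟶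
      TopCat.of (sphere (0 : EuclideanSpace ℝ (Fin 2)) 1 ×
        closedBall (0 : EuclideanSpace ℝ (Fin 2)) 1) :=
  TopCat.ofHom ⟨Prod.map id (Set.inclusion sphere_subset_closedBall),
    Continuous.prodMap continuous_id (continuous_inclusion _)⟩

noncomputable section
open Real
namespace DST

abbrev E2 := EuclideanSpace ℝ (Fin 2)
abbrev E3 := EuclideanSpace ℝ (Fin 3)
def sf (w : E2) : ℝ := Real.sqrt (1 - ‖w‖ ^ 2)
def upF (w : E2) : E3 := (WithLp.equiv 2 _).symm (Fin.snoc (WithLp.equiv 2 _ w) (sf w))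
def downF (w : E2) : E3 := (WithLp.equiv 2 _).symm (Fin.snoc (WithLp.equiv 2 _ w) (-sf w))
def projF (p : E3) : E2 := (WithLp.equiv 2 _).symm (fun i => p i.castSucc)

lemma normE2_sq (w : E2) : ‖w‖ ^ 2 = w 0 ^ 2 + w 1 ^ 2 := by
  rw [EuclideanSpace.norm_eq, Real.sq_sqrt (by positivity)]
  simp [Fin.sum_univ_two, sq_abs]
lemma normE3_sq (p : E3) : ‖p‖ ^ 2 = p 0 ^ 2 + p 1 ^ 2 + p 2 ^ 2 := by
  rw [EuclideanSpace.norm_eq, Real.sq_sqrt (by positivity)]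
  simp [Fin.sum_univ_three, sq_abs]
lemma upF_cast (w : E2) (i : Fin 2) : upF w i.castSucc = w i := by
  simp [upF, Fin.snoc_castSucc]
lemma upF_two (w : E2) : upF w 2 = sf w := by
  have : (2 : Fin 3) = Fin.last 2 := rfl
  simp [upF]; rw [this, Fin.snoc_last]
lemma downF_cast (w : E2) (i : Fin 2) : downF w i.castSucc = w i := by
  simp [downF, Fin.snoc_castSucc]
lemma downF_two (w : E2) : downF w 2 = -sf w := by
  have : (2 : Fin 3) = Fin.last 2 := rfl
  simp [downF]; rw [this, Fin.snoc_last]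
lemma projF_apply (p : E3) (i : Fin 2) : projF p i = p i.castSucc := rfl

lemma c01 : ((0 : Fin 2).castSucc = (0 : Fin 3)) ∧ ((1 : Fin 2).castSucc = (1 : Fin 3)) := ⟨rfl, rfl⟩

lemma sf_sq {w : E2} (hw : ‖w‖ ≤ 1) : sf w ^ 2 = 1 - ‖w‖ ^ 2 := by
  rw [sf, Real.sq_sqrt]; nlinarith [norm_nonneg w]

lemma norm_upF {w : E2} (hw : ‖w‖ ≤ 1) : ‖upF w‖ = 1 := by
  have h2 : ‖upF w‖ ^ 2 = 1 := by
    rw [normE3_sq]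
    rw [show (0:Fin 3) = (0:Fin 2).castSucc from rfl, show (1:Fin 3) = (1:Fin 2).castSucc from rfl]
    rw [upF_cast, upF_cast, upF_two, sf_sq hw]
    nlinarith [normE2_sq w]
  nlinarith [norm_nonneg (upF w)]

lemma norm_downF {w : E2} (hw : ‖w‖ ≤ 1) : ‖downF w‖ = 1 := by
  have h2 : ‖downF w‖ ^ 2 = 1 := by
    rw [normE3_sq]
    rw [show (0:Fin 3) = (0:Fin 2).castSucc from rfl, show (1:Fin 3) = (1:Fin 2).castSucc from rfl]
    rw [downF_cast, downF_cast, downF_two]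
    have := sf_sq hw
    nlinarith [normE2_sq w]
  nlinarith [norm_nonneg (downF w)]

lemma norm_projF_sq {p : E3} (hp : ‖p‖ = 1) : ‖projF p‖ ^ 2 = 1 - p 2 ^ 2 := by
  rw [normE2_sq, projF_apply, projF_apply]
  rw [show ((0:Fin 2).castSucc) = (0:Fin 3) from rfl, show ((1:Fin 2).castSucc) = (1:Fin 3) from rfl]
  nlinarith [normE3_sq p]

lemma norm_projF_le {p : E3} (hp : ‖p‖ = 1) : ‖projF p‖ ≤ 1 := by
  nlinarith [norm_projF_sq hp, norm_nonneg (projF p), sq_nonneg (p 2)]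

lemma sf_projF {p : E3} (hp : ‖p‖ = 1) : sf (projF p) = |p 2| := by
  rw [sf, norm_projF_sq hp]; simp [Real.sqrt_sq_eq_abs]

lemma upF_projF {p : E3} (hp : ‖p‖ = 1) (h2 : 0 ≤ p 2) : upF (projF p) = p := by
  ext i
  refine Fin.lastCases ?_ (fun i => ?_) i
  · rw [show (Fin.last 2) = (2 : Fin 3) from rfl, upF_two, sf_projF hp, abs_of_nonneg h2]
  · rw [upF_cast, projF_apply]

lemma downF_projF {p : E3} (hp : ‖p‖ = 1) (h2 : p 2 ≤ 0) : downF (projF p) = p := by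
  ext i
  refine Fin.lastCases ?_ (fun i => ?_) i
  · rw [show (Fin.last 2) = (2 : Fin 3) from rfl, downF_two, sf_projF hp, abs_of_nonpos h2, neg_neg]
  · rw [downF_cast, projF_apply]

lemma sf_eq_zero {w : E2} (hw : ‖w‖ = 1) : sf w = 0 := by simp [sf, hw]

lemma upF_eq_downF {w : E2} (hw : ‖w‖ = 1) : upF w = downF w := by
  ext i
  refine Fin.lastCases ?_ (fun i => ?_) i
  · rw [show (Fin.last 2) = (2 : Fin 3) from rfl, upF_two, downF_two, sf_eq_zero hw, neg_zero]
  · rw [upF_cast, downF_cast]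

lemma projF_upF (w : E2) : projF (upF w) = w := by
  ext i; rw [projF_apply, upF_cast]
lemma projF_downF (w : E2) : projF (downF w) = w := by
  ext i; rw [projF_apply, downF_cast]

lemma norm_projF_boundary {p : E3} (hp : ‖p‖ = 1) (h2 : p 2 = 0) : ‖projF p‖ = 1 := by
  have := norm_projF_sq hp
  rw [h2] at this
  nlinarith [norm_nonneg (projF p)]

-- continuity
lemma continuous_sf : Continuous sf := by
  unfold sf; fun_prop
lemma continuous_apply3 (i : Fin 3) : Continuous (fun p : E3 => p i) :=
  (continuous_apply i).comp (PiLp.continuous_ofLp _ _)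
lemma continuous_upF : Continuous upF := by
  refine (PiLp.continuous_toLp _ _).comp ?_
  refine continuous_pi fun i => ?_
  refine Fin.lastCases ?_ (fun i => ?_) i
  · simpa only [Fin.snoc_last] using continuous_sf
  · simp only [Fin.snoc_castSucc]
    exact (continuous_apply i).comp (PiLp.continuous_ofLp _ _)
lemma continuous_downF : Continuous downF := by
  refine (PiLp.continuous_toLp _ _).comp ?_
  refine continuous_pi fun i => ?_
  refine Fin.lastCases ?_ (fun i => ?_) i
  · simp only [Fin.snoc_last]; exact continuous_sf.neg
  · simp only [Fin.snoc_castSucc]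
    exact (continuous_apply i).comp (PiLp.continuous_ofLp _ _)
lemma continuous_projF : Continuous projF :=
  (PiLp.continuous_toLp _ _).comp (continuous_pi fun i => continuous_apply3 i.castSucc)

lemma sf_nonneg (w : E2) : 0 ≤ sf w := Real.sqrt_nonneg _

lemma norm_of_sf_eq_zero {w : E2} (hw : ‖w‖ ≤ 1) (h : sf w = 0) : ‖w‖ = 1 := by
  have h1 : 1 - ‖w‖ ^ 2 ≤ 0 := Real.sqrt_eq_zero'.mp h
  nlinarith [norm_nonneg w]

abbrev S1 := sphere (0 : E2) 1
abbrev D2 := closedBall (0 : E2) 1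
abbrev S2 := sphere (0 : E3) 1

def upHom : TopCat.of (S1 × D2) ⟶ TopCat.of (S1 × S2) :=
  TopCat.ofHom ⟨fun x => (x.1, ⟨upF x.2, by
      rw [mem_sphere_zero_iff_norm]
      exact norm_upF (mem_closedBall_zero_iff.mp x.2.2)⟩),
   by
    refine continuous_fst.prodMk (Continuous.subtype_mk ?_ _)
    exact continuous_upF.comp (continuous_subtype_val.comp continuous_snd)⟩

def downHom : TopCat.of (S1 × D2) ⟶ TopCat.of (S1 × S2) :=
  TopCat.ofHom ⟨fun x => (x.1, ⟨downF x.2, by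
      rw [mem_sphere_zero_iff_norm]
      exact norm_downF (mem_closedBall_zero_iff.mp x.2.2)⟩),
   by
    refine continuous_fst.prodMk (Continuous.subtype_mk ?_ _)
    exact continuous_downF.comp (continuous_subtype_val.comp continuous_snd)⟩

lemma comm : boundaryTorusIncl ≫ upHom = boundaryTorusIncl ≫ downHom := by
  apply TopCat.hom_ext
  apply ContinuousMap.ext
  rintro ⟨z, w, hw⟩
  have hw1 : ‖w‖ = 1 := mem_sphere_zero_iff_norm.mp hw
  exact Prod.ext rfl (Subtype.ext (upF_eq_downF hw1))

def hh : (pushout boundaryTorusIncl boundaryTorusIncl : TopCat) ⟶ TopCat.of (S1 × S2) :=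
  pushout.desc upHom downHom comm

def kFun (y : S1 × S2) : (pushout boundaryTorusIncl boundaryTorusIncl : TopCat) :=
  if 0 ≤ (y.2 : E3) 2 then
    pushout.inl boundaryTorusIncl boundaryTorusIncl
      (y.1, ⟨projF y.2, mem_closedBall_zero_iff.mpr
        (norm_projF_le (mem_sphere_zero_iff_norm.mp y.2.2))⟩)
  else
    pushout.inr boundaryTorusIncl boundaryTorusIncl
      (y.1, ⟨projF y.2, mem_closedBall_zero_iff.mpr
        (norm_projF_le (mem_sphere_zero_iff_norm.mp y.2.2))⟩)

lemma inl_eq_inr {z : S1} {w : E2} (hw : ‖w‖ = 1) (hw' : w ∈ D2) :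
    pushout.inl boundaryTorusIncl boundaryTorusIncl (z, ⟨w, hw'⟩) =
    pushout.inr boundaryTorusIncl boundaryTorusIncl (z, ⟨w, hw'⟩) := by
  have := ConcreteCategory.congr_hom
    (pushout.condition (f := boundaryTorusIncl) (g := boundaryTorusIncl))
    ((z, ⟨w, mem_sphere_zero_iff_norm.mpr hw⟩) : S1 × S1)
  exact this

lemma continuous_kFun : Continuous kFun := by
  have hc1 : Continuous fun y : S1 × S2 =>
      pushout.inl boundaryTorusIncl boundaryTorusIncl
        (y.1, (⟨projF y.2, mem_closedBall_zero_iff.mpr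
          (norm_projF_le (mem_sphere_zero_iff_norm.mp y.2.2))⟩ : D2)) := by
    refine (pushout.inl boundaryTorusIncl boundaryTorusIncl).hom.continuous.comp ?_
    exact continuous_fst.prodMk (Continuous.subtype_mk
      (continuous_projF.comp (continuous_subtype_val.comp continuous_snd)) _)
  have hc2 : Continuous fun y : S1 × S2 =>
      pushout.inr boundaryTorusIncl boundaryTorusIncl
        (y.1, (⟨projF y.2, mem_closedBall_zero_iff.mpr
          (norm_projF_le (mem_sphere_zero_iff_norm.mp y.2.2))⟩ : D2)) := by
    refine (pushout.inr boundaryTorusIncl boundaryTorusIncl).hom.continuous.comp ?_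
    exact continuous_fst.prodMk (Continuous.subtype_mk
      (continuous_projF.comp (continuous_subtype_val.comp continuous_snd)) _)
  have hq : Continuous fun y : S1 × S2 => (y.2 : E3) 2 :=
    ((continuous_apply (2 : Fin 3)).comp (PiLp.continuous_ofLp _ _)).comp
      (continuous_subtype_val.comp continuous_snd)
  refine Continuous.if_le hc1 hc2 continuous_const hq ?_
  rintro ⟨z, p, hp⟩ hb
  have hp1 : ‖p‖ = 1 := mem_sphere_zero_iff_norm.mp hp
  exact inl_eq_inr (norm_projF_boundary hp1 hb.symm) _

lemma hK : hh ≫ (TopCat.ofHom ⟨kFun, continuous_kFun⟩ : TopCat.of (S1 × S2) ⟶ _) = 𝟙 _ := by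
  apply pushout.hom_ext
  · rw [← Category.assoc, hh, pushout.inl_desc, Category.comp_id]
    apply TopCat.hom_ext
    apply ContinuousMap.ext
    rintro ⟨z, w, hw⟩
    show kFun (upHom (z, ⟨w, hw⟩)) = _
    have h2 : 0 ≤ upF w 2 := by rw [upF_two]; exact sf_nonneg w
    rw [kFun]
    split_ifs with h
    · exact congrArg _ (Prod.ext rfl (Subtype.ext (projF_upF w)))
    · exact absurd h2 h
  · rw [← Category.assoc, hh, pushout.inr_desc, Category.comp_id]
    apply TopCat.hom_ext
    apply ContinuousMap.ext
    rintro ⟨z, w, hw⟩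
    show kFun (downHom (z, ⟨w, hw⟩)) = _
    have hwle : ‖w‖ ≤ 1 := mem_closedBall_zero_iff.mp hw
    by_cases h2 : 0 ≤ downF w 2
    · have hs0 : sf w = 0 := by
        rw [downF_two] at h2
        have := sf_nonneg w; linarith
      have hw1 : ‖w‖ = 1 := norm_of_sf_eq_zero hwle hs0
      rw [kFun]
      split_ifs with h
      · refine Eq.trans ?_ (inl_eq_inr hw1 hw)
        congr 1
        exact Prod.ext rfl (Subtype.ext (projF_downF w))
      · exact absurd h2 h
    · rw [kFun]
      split_ifs with h
      · exact absurd h h2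
      · exact congrArg _ (Prod.ext rfl (Subtype.ext (projF_downF w)))

lemma right_inv (y : S1 × S2) : hh (kFun y) = y := by
  obtain ⟨z, p, hp⟩ := y
  have hp1 : ‖p‖ = 1 := mem_sphere_zero_iff_norm.mp hp
  rw [kFun]
  split_ifs with h2
  · have := ConcreteCategory.congr_hom (pushout.inl_desc upHom downHom comm)
      ((z, ⟨projF p, mem_closedBall_zero_iff.mpr (norm_projF_le hp1)⟩) : S1 × D2)
    rw [hh]
    refine this.trans ?_
    exact Prod.ext rfl (Subtype.ext (upF_projF hp1 h2))
  · have := ConcreteCategory.congr_hom (pushout.inr_desc upHom downHom comm)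
      ((z, ⟨projF p, mem_closedBall_zero_iff.mpr (norm_projF_le hp1)⟩) : S1 × D2)
    rw [hh]
    refine this.trans ?_
    exact Prod.ext rfl (Subtype.ext (downF_projF hp1 (le_of_not_ge h2)))

end DST
end

/-- The double of the solid torus `S¹ × D²` along its boundary torus `S¹ × S¹`, i.e. the
pushout in `TopCat` of two copies of the boundary inclusion `S¹ × S¹ ↪ S¹ × D²`,
is homeomorphic to `S¹ × S²`. -/
theorem double_of_solid_torus_homeomorphic :
    Nonempty ((pushout boundaryTorusIncl boundaryTorusIncl : TopCat) ≃ₜ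
      (sphere (0 : EuclideanSpace ℝ (Fin 2)) 1 ×
        sphere (0 : EuclideanSpace ℝ (Fin 3)) 1)) := by
  refine ⟨⟨⟨DST.hh, DST.kFun, fun x => ?_, DST.right_inv⟩, DST.hh.hom.continuous, DST.continuous_kFun⟩⟩
  exact ConcreteCategory.congr_hom DST.hK x
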